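/- Let (Q, 𝔪, k) be a local Artinian ring with 𝔪³ = 0 whose Hilbert series is 1 + et + (e-1)t², and let f ∈ Q satisfy f² = 0 and f𝔪 = 𝔪². Then ℓ(ann_Q(f)) = e and ℓ((f)) = e, so ann_Q(f) = (f). -/

import Mathlib

open IsLocalRing

/-- The length of a module, defined as the Krull dimension of its lattice of submodules. -/
noncomputable def moduleLength (Q M : Type) [CommRing Q] [AddCommGroup M] [Module Q M] : ℕ∞ :=
  WithBot.unbotD 0 (Order.krullDim (Submodule Q M))

/-- The `n`-th coefficient of the Hilbert series of a local ring `Q`,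
namely `dim_k (𝔪ⁿ/𝔪ⁿ⁺¹)`, computed as the length over `Q` of `𝔪ⁿ/𝔪ⁿ⁺¹`. -/
noncomputable def hilbCoeff (Q : Type) [CommRing Q] [IsLocalRing Q] (n : ℕ) : ℕ∞ :=
  moduleLength Q
    (↥(maximalIdeal Q ^ n) ⧸
      (Submodule.comap (maximalIdeal Q ^ n).subtype (maximalIdeal Q ^ (n + 1))))

/-! ### Auxiliary length theory -/

/-- The supremum of the lengths of strictly increasing series in a preorder. -/
noncomputable def iLen (α : Type*) [Preorder α] : ℕ∞ :=
  ⨆ p : LTSeries α, (p.length : ℕ∞)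

lemma moduleLength_eq_iLen (Q M : Type) [CommRing Q] [AddCommGroup M] [Module Q M] :
    moduleLength Q M = iLen (Submodule Q M) := by
  rw [moduleLength, Order.krullDim_eq_iSup_length, iLen, WithBot.unbotD_coe]

lemma iLen_congr {α β : Type*} [Preorder α] [Preorder β] (f : α ≃o β) :
    iLen α = iLen β := by
  refine le_antisymm (iSup_le fun p => ?_) (iSup_le fun p => ?_)
  · exact le_iSup_of_le (p.map f f.strictMono) (by simp)
  · exact le_iSup_of_le (p.map f.symm f.symm.strictMono) (by simp)

lemma moduleLength_congr {Q M N : Type} [CommRing Q] [AddCommGroup M] [Module Q M]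
    [AddCommGroup N] [Module Q N] (e : M ≃ₗ[Q] N) :
    moduleLength Q M = moduleLength Q N := by
  rw [moduleLength_eq_iLen, moduleLength_eq_iLen]
  exact iLen_congr (Submodule.orderIsoMapComap e)

lemma height_add_one_le_of_lt {α : Type*} [Preorder α] {x y : α} (h : x < y) :
    Order.height x + 1 ≤ Order.height y := by
  rw [Order.height_eq_iSup_lt_height y]
  exact le_iSup₂ (f := fun z (_ : z < y) => Order.height z + 1) x h

lemma height_le_iLen {α : Type*} [Preorder α] (a : α) : Order.height a ≤ iLen α :=
  Order.height_le fun p _ => le_iSup (fun q : LTSeries α => (q.length : ℕ∞)) p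

private lemma step_count {β γ : Type*} [Preorder β] [Preorder γ] :
    ∀ (n : ℕ) (f : ℕ → β) (g : ℕ → γ),
    (∀ i < n, f i ≤ f (i + 1)) → (∀ i < n, g i ≤ g (i + 1)) →
    (∀ i < n, f i < f (i + 1) ∨ g i < g (i + 1)) →
    (n : ℕ∞) ≤ Order.height (f n) + Order.height (g n) := by
  intro n
  induction n with
  | zero => intro f g _ _ _; simp
  | succ n ih =>
    intro f g hf hg hs
    have h1 := ih f g (fun i hi => hf i (by omega)) (fun i hi => hg i (by omega))
      (fun i hi => hs i (by omega))
    push_cast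
    rcases hs n (by omega) with h | h
    · calc (n : ℕ∞) + 1 ≤ (Order.height (f n) + Order.height (g n)) + 1 := by
            exact add_le_add_left h1 1
        _ = (Order.height (f n) + 1) + Order.height (g n) := by ring
        _ ≤ Order.height (f (n + 1)) + Order.height (g (n + 1)) :=
            add_le_add (height_add_one_le_of_lt h) (Order.height_mono (hg n (by omega)))
    · calc (n : ℕ∞) + 1 ≤ (Order.height (f n) + Order.height (g n)) + 1 := by
            exact add_le_add_left h1 1
        _ = Order.height (f n) + (Order.height (g n) + 1) := by ring
        _ ≤ Order.height (f (n + 1)) + Order.height (g (n + 1)) :=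
            add_le_add (Order.height_mono (hf n (by omega))) (height_add_one_le_of_lt h)

private lemma iLen_le_split {α : Type*} [Lattice α] [IsModularLattice α] (N : α) :
    iLen α ≤ iLen {x : α // x ≤ N} + iLen {x : α // N ≤ x} := by
  refine iSup_le fun p => ?_
  set n := p.length with hn
  have hidx : ∀ i : ℕ, min i n < n + 1 := fun i => by omega
  set F : ℕ → {x : α // x ≤ N} := fun i => ⟨(p ⟨min i n, hidx i⟩ : α) ⊓ N, inf_le_right⟩ with hF
  set G : ℕ → {x : α // N ≤ x} := fun i => ⟨(p ⟨min i n, hidx i⟩ : α) ⊔ N, le_sup_right⟩ with hG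
  have hmono : ∀ i < n, (p ⟨min i n, hidx i⟩ : α) < p ⟨min (i + 1) n, hidx (i + 1)⟩ := by
    intro i hi
    exact p.strictMono (by simp [Fin.mk_lt_mk]; omega)
  have hf : ∀ i < n, F i ≤ F (i + 1) := fun i hi =>
    Subtype.mk_le_mk.mpr (inf_le_inf_right N (hmono i hi).le)
  have hg : ∀ i < n, G i ≤ G (i + 1) := fun i hi =>
    Subtype.mk_le_mk.mpr (sup_le_sup_right (hmono i hi).le N)
  have hs : ∀ i < n, F i < F (i + 1) ∨ G i < G (i + 1) := by
    intro i hi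
    rcases lt_or_eq_of_le (hf i hi) with h | hFe
    · exact Or.inl h
    rcases lt_or_eq_of_le (hg i hi) with h | hGe
    · exact Or.inr h
    exfalso
    apply (hmono i hi).ne
    have hFe' : (p ⟨min (i + 1) n, hidx (i + 1)⟩ : α) ⊓ N ≤ (p ⟨min i n, hidx i⟩ : α) ⊓ N :=
      le_of_eq (congrArg Subtype.val hFe).symm
    have hGe' : (p ⟨min (i + 1) n, hidx (i + 1)⟩ : α) ⊔ N ≤ (p ⟨min i n, hidx i⟩ : α) ⊔ N :=
      le_of_eq (congrArg Subtype.val hGe).symm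
    exact eq_of_le_of_inf_le_of_sup_le (hmono i hi).le hFe' hGe' 
  calc (p.length : ℕ∞) ≤ Order.height (F n) + Order.height (G n) := step_count n F G hf hg hs
    _ ≤ iLen {x : α // x ≤ N} + iLen {x : α // N ≤ x} :=
        add_le_add (height_le_iLen _) (height_le_iLen _)

private lemma split_le_iLen {α : Type*} [Lattice α] (N : α) :
    iLen {x : α // x ≤ N} + iLen {x : α // N ≤ x} ≤ iLen α := by
  haveI : Nonempty (LTSeries {x : α // x ≤ N}) := ⟨RelSeries.singleton _ ⟨N, le_rfl⟩⟩
  haveI : Nonempty (LTSeries {x : α // N ≤ x}) := ⟨RelSeries.singleton _ ⟨N, le_rfl⟩⟩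
  rw [iLen, ENat.iSup_add]
  refine iSup_le fun p => ?_
  rw [iLen, ENat.add_iSup]
  refine iSup_le fun q => ?_
  have hm1 : StrictMono (fun x : {x : α // x ≤ N} => (x : α)) := fun a b h => h
  have hm2 : StrictMono (fun x : {x : α // N ≤ x} => (x : α)) := fun a b h => h
  set p' := p.map _ hm1 with hp'
  set q' := q.map _ hm2 with hq'
  have hle : p'.last ≤ q'.head := le_trans p.last.2 q.head.2
  rcases eq_or_lt_of_le hle with h | h
  · refine le_trans (le_of_eq ?_) (le_iSup (fun r : LTSeries α => (r.length : ℕ∞)) (p'.smash q' h))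
    rw [RelSeries.smash_length]
    push_cast
    rfl
  · refine le_trans ?_ (le_iSup (fun r : LTSeries α => (r.length : ℕ∞)) (p'.append q' h))
    rw [RelSeries.append_length]
    push_cast
    exact self_le_add_right _ _

lemma moduleLength_additive {Q M : Type} [CommRing Q] [AddCommGroup M] [Module Q M]
    (N : Submodule Q M) :
    moduleLength Q M = moduleLength Q ↥N + moduleLength Q (M ⧸ N) := by
  rw [moduleLength_eq_iLen, moduleLength_eq_iLen, moduleLength_eq_iLen,
    iLen_congr (Submodule.MapSubtype.orderIso N), iLen_congr (Submodule.comapMkQRelIso N)]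
  exact le_antisymm (iLen_le_split N) (split_le_iLen N)


lemma moduleLength_eq_one_of_isSimpleModule {Q M : Type} [CommRing Q] [AddCommGroup M]
    [Module Q M] [IsSimpleModule Q M] : moduleLength Q M = 1 := by
  rw [moduleLength_eq_iLen]
  refine le_antisymm (iSup_le fun p => ?_) ?_
  · have hl : p.length ≤ 1 := by
      by_contra hlen
      push_neg at hlen
      have h0 : (⟨0, by omega⟩ : Fin (p.length + 1)) < ⟨1, by omega⟩ :=
        Fin.mk_lt_mk.mpr (by omega)
      have h1 : (⟨1, by omega⟩ : Fin (p.length + 1)) < ⟨2, by omega⟩ :=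
        Fin.mk_lt_mk.mpr (by omega)
      have l0 := p.strictMono h0
      have l1 := p.strictMono h1
      rcases eq_bot_or_eq_top (p ⟨1, by omega⟩) with h | h
      · rw [h] at l0; exact not_lt_bot l0
      · rw [h] at l1; exact not_top_lt l1
    exact_mod_cast hl
  · refine le_iSup_of_le ⟨1, ![⊥, ⊤], ?_⟩ ?_
    · intro i; fin_cases i; simpa using (bot_lt_top : (⊥ : Submodule Q M) < ⊤)
    · simp

lemma subsingleton_of_moduleLength_eq_zero {Q M : Type} [CommRing Q] [AddCommGroup M]
    [Module Q M] (h : moduleLength Q M = 0) : Subsingleton M := by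
  by_contra hns
  rw [not_subsingleton_iff_nontrivial] at hns
  obtain ⟨x, hx⟩ := exists_ne (0 : M)
  have hbt : (⊥ : Submodule Q M) < ⊤ := by
    refine lt_of_le_of_ne bot_le fun hbt => hx ?_
    have : x ∈ (⊥ : Submodule Q M) := hbt ▸ Submodule.mem_top
    simpa using this
  have hle := le_iSup (fun p : LTSeries (Submodule Q M) => (p.length : ℕ∞))
    ⟨1, ![⊥, ⊤], by intro i; fin_cases i; simpa using hbt⟩
  rw [moduleLength_eq_iLen, iLen] at h
  rw [h] at hle
  simp at hle

set_option maxHeartbeats 1000000 in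
theorem ann_eq_span_of_conca_generator
    (Q : Type) [CommRing Q] [IsLocalRing Q] [IsArtinianRing Q]
    (h3 : maximalIdeal Q ^ 3 = ⊥)
    (e : ℕ) (he : hilbCoeff Q 1 = e) (h2 : hilbCoeff Q 2 = ((e - 1 : ℕ) : ℕ∞))
    (f : Q) (hf : f ≠ 0) (hf2 : f ^ 2 = 0)
    (hfm : Ideal.span {f} * maximalIdeal Q = maximalIdeal Q ^ 2) :
    moduleLength Q ↥((Ideal.span {f} : Submodule Q Q).annihilator) = (e : ℕ∞) ∧
      moduleLength Q ↥(Ideal.span {f}) = (e : ℕ∞) ∧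
      (Ideal.span {f} : Submodule Q Q).annihilator = Ideal.span {f} := by
  simp only [hilbCoeff] at he h2
  have hLm2 : moduleLength Q ↥(maximalIdeal Q ^ 2) = ((e - 1 : ℕ) : ℕ∞) :=
    (moduleLength_congr (Submodule.quotEquivOfEqBot
      ((Submodule.comap (Submodule.subtype (maximalIdeal Q ^ 2)) (maximalIdeal Q ^ (2 + 1)) :
        Submodule Q ↥(maximalIdeal Q ^ 2)))
      (by rw [show (2 + 1 : ℕ) = 3 from rfl, h3, Submodule.comap_bot,
        Submodule.ker_subtype]))).symm.trans h2
  have hm11 : maximalIdeal Q ^ (1 + 1) ≤ maximalIdeal Q ^ 1 :=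
    Ideal.pow_le_pow_right (by omega)
  have hm2m : maximalIdeal Q ^ 2 ≤ maximalIdeal Q := Ideal.pow_le_self two_ne_zero
  have hfu : ¬ IsUnit f := fun hu => (hu.pow 2).ne_zero hf2
  have hfmem : f ∈ maximalIdeal Q := by rwa [mem_maximalIdeal, mem_nonunits_iff]
  have hm2f : maximalIdeal Q ^ 2 ≤ Ideal.span {f} := by rw [← hfm]; exact Ideal.mul_le_left
  have hfspan : f ∈ Ideal.span {f} := Submodule.mem_span_singleton_self f
  have hff : f * f = 0 := by simpa [pow_two] using hf2
  have hfnot : f ∉ maximalIdeal Q ^ 2 := by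
    intro hf2m
    have h1 : Ideal.span {f} ≤ maximalIdeal Q ^ 2 := by rw [Ideal.span_singleton_le_iff_mem]; exact hf2m
    have h23 : maximalIdeal Q ^ 2 ≤ maximalIdeal Q ^ 3 := by
      calc maximalIdeal Q ^ 2 = Ideal.span {f} * maximalIdeal Q := hfm.symm
        _ ≤ (maximalIdeal Q ^ 2) * maximalIdeal Q := Ideal.mul_mono h1 le_rfl
        _ = maximalIdeal Q ^ 3 := by ring
    rw [h3] at h23
    exact hf ((Submodule.mem_bot Q).mp (h23 (h1 hfspan)))
  have he1' : 1 ≤ e := by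
    rcases Nat.eq_zero_or_pos e with h0 | h0
    · exfalso
      subst h0
      rw [Nat.cast_zero] at he
      have hsub := subsingleton_of_moduleLength_eq_zero he
      have htop := Submodule.Quotient.subsingleton_iff.mp hsub
      have hmm : maximalIdeal Q ≤ maximalIdeal Q ^ 2 := by
        intro x hx
        have hx1 : x ∈ maximalIdeal Q ^ 1 := by rwa [pow_one]
        have hx2 : (⟨x, hx1⟩ : ↥(maximalIdeal Q ^ 1)) ∈
            Submodule.comap (Submodule.subtype (maximalIdeal Q ^ 1))
              (maximalIdeal Q ^ (1 + 1)) := htop ▸ Submodule.mem_top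
        have hx3 : x ∈ maximalIdeal Q ^ (1 + 1) := hx2
        rwa [show (1 + 1 : ℕ) = 2 from rfl] at hx3
      have h23 : maximalIdeal Q ^ 2 ≤ maximalIdeal Q ^ 3 := by
        calc maximalIdeal Q ^ 2 = maximalIdeal Q * maximalIdeal Q := by ring
          _ ≤ (maximalIdeal Q ^ 2) * maximalIdeal Q := Ideal.mul_mono hmm le_rfl
          _ = maximalIdeal Q ^ 3 := by ring
      have hmb : maximalIdeal Q = ⊥ := le_bot_iff.mp (h3 ▸ hmm.trans h23)
      exact hf ((Submodule.mem_bot Q).mp (hmb ▸ hfmem))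
    · exact h0
  -- length of a simple quotient of Q by a maximal-kernel map
  have hLk : ∀ N : Submodule Q Q, N = (maximalIdeal Q : Submodule Q Q) → moduleLength Q (Q ⧸ N) = 1 := by
    intro N hN
    subst hN
    haveI : IsSimpleModule Q (Q ⧸ (maximalIdeal Q : Submodule Q Q)) :=
      isSimpleModule_iff_isCoatom.mpr (Ideal.isMaximal_def.mp (maximalIdeal.isMaximal Q))
    exact moduleLength_eq_one_of_isSimpleModule
  have hLm' : moduleLength Q ↥(maximalIdeal Q) = ((e - 1 : ℕ) : ℕ∞) + (e : ℕ∞) := by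
    have hadd := moduleLength_additive (M := ↥(maximalIdeal Q ^ 1)) (Submodule.comap
      (Submodule.subtype (maximalIdeal Q ^ 1)) (maximalIdeal Q ^ (1 + 1)))
    rw [he, moduleLength_congr (Submodule.comapSubtypeEquivOfLe hm11),
      moduleLength_congr (LinearEquiv.ofEq _ _
        (show maximalIdeal Q ^ (1 + 1) = maximalIdeal Q ^ 2 from rfl)), hLm2] at hadd
    rw [← hadd]
    exact moduleLength_congr (LinearEquiv.ofEq _ _ (pow_one (maximalIdeal Q)).symm)
  have hQe : moduleLength Q Q = (e : ℕ∞) + (e : ℕ∞) := by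
    have harith : (e - 1) + e + 1 = e + e := by omega
    calc moduleLength Q Q
        = moduleLength Q ↥(maximalIdeal Q) + moduleLength Q (Q ⧸ (maximalIdeal Q : Submodule Q Q)) :=
          moduleLength_additive (maximalIdeal Q : Submodule Q Q)
      _ = (((e - 1) + e + 1 : ℕ) : ℕ∞) := by
          rw [hLm', hLk _ rfl]; push_cast; ring
      _ = ((e + e : ℕ) : ℕ∞) := by rw [harith]
      _ = (e : ℕ∞) + (e : ℕ∞) := by push_cast; ring
  -- the map c ↦ c • f onto S
  set ψ : Q →ₗ[Q] Q := LinearMap.toSpanSingleton Q Q f with hψ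
  have hmemS : ∀ c : Q, ψ c ∈ Ideal.span {f} := fun c => (Ideal.span {f}).smul_mem c hfspan
  set φ : Q →ₗ[Q] ↥(Ideal.span {f} : Ideal Q) := LinearMap.codRestrict (Ideal.span {f}) ψ hmemS with hφ
  have hφsurj : Function.Surjective φ := by
    rintro ⟨y, hy⟩
    obtain ⟨c, hc⟩ := Ideal.mem_span_singleton'.mp hy
    exact ⟨c, Subtype.ext (by
      simp [hφ, hψ, LinearMap.toSpanSingleton_apply, smul_eq_mul, hc])⟩
  have hkerφ : LinearMap.ker φ = (Ideal.span {f} : Submodule Q Q).annihilator := by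
    ext x
    rw [LinearMap.mem_ker, Submodule.mem_annihilator]
    constructor
    · intro hx y hy
      obtain ⟨d, hd⟩ := Ideal.mem_span_singleton'.mp hy
      have hxf : x * f = 0 := by
        have := congrArg Subtype.val hx
        simpa [hφ, hψ, LinearMap.toSpanSingleton_apply, smul_eq_mul] using this
      rw [← hd, smul_eq_mul]
      calc x * (d * f) = d * (x * f) := by ring
        _ = 0 := by rw [hxf, mul_zero]
    · intro hx
      have hxf : x • f = 0 := hx f hfspan
      apply Subtype.ext
      simpa [hφ, hψ, LinearMap.toSpanSingleton_apply] using hxf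
  -- quotient of S by m^2 inside S is simple
  set N2 : Submodule Q ↥(Ideal.span {f} : Ideal Q) := Submodule.comap (Ideal.span {f} : Ideal Q).subtype (maximalIdeal Q ^ 2) with hN2
  set χ : Q →ₗ[Q] (↥(Ideal.span {f} : Ideal Q) ⧸ N2) := N2.mkQ.comp φ with hχ
  have hχsurj : Function.Surjective χ := (N2.mkQ_surjective).comp hφsurj
  have hkerχ : LinearMap.ker χ = (maximalIdeal Q : Submodule Q Q) := by
    ext x
    have hmem : χ x = 0 ↔ x * f ∈ maximalIdeal Q ^ 2 := by
      rw [hχ, LinearMap.comp_apply, Submodule.mkQ_apply, Submodule.Quotient.mk_eq_zero, hN2,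
        Submodule.mem_comap]
      simp [hφ, hψ, LinearMap.toSpanSingleton_apply, smul_eq_mul]
    rw [LinearMap.mem_ker, hmem]
    constructor
    · intro hx
      by_contra hxm
      have hxu : IsUnit x := by
        rw [mem_maximalIdeal, mem_nonunits_iff, not_not] at hxm
        exact hxm
      obtain ⟨u, rfl⟩ := hxu
      have hfin : f ∈ maximalIdeal Q ^ 2 := by
        have h1 := Ideal.mul_mem_left (maximalIdeal Q ^ 2) (↑u⁻¹ : Q) hx
        rwa [← mul_assoc, Units.inv_mul, one_mul] at h1
      exact hfnot hfin
    · intro hxm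
      have h1 : f * x ∈ maximalIdeal Q ^ 2 := by
        rw [← hfm]; exact Ideal.mul_mem_mul hfspan hxm
      rwa [mul_comm] at h1
  have hLSq : moduleLength Q (↥(Ideal.span {f} : Ideal Q) ⧸ N2) = 1 := by
    have hcongr := moduleLength_congr (LinearMap.quotKerEquivOfSurjective χ hχsurj)
    rw [← hcongr]
    exact hLk _ hkerχ
  have hLS : moduleLength Q ↥(Ideal.span {f} : Ideal Q) = (e : ℕ∞) := by
    rw [moduleLength_additive N2, hN2,
      moduleLength_congr (Submodule.comapSubtypeEquivOfLe hm2f), hLm2, ← hN2, hLSq]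
    calc ((e - 1 : ℕ) : ℕ∞) + 1 = (((e - 1) + 1 : ℕ) : ℕ∞) := by push_cast; ring
      _ = (e : ℕ∞) := by rw [Nat.sub_add_cancel he1']
  have hLQa : moduleLength Q (Q ⧸ ((Ideal.span {f} : Submodule Q Q).annihilator : Submodule Q Q)) = moduleLength Q ↥(Ideal.span {f} : Ideal Q) := by
    rw [← hkerφ]
    exact moduleLength_congr (LinearMap.quotKerEquivOfSurjective φ hφsurj)
  have hann : moduleLength Q ↥((Ideal.span {f} : Submodule Q Q).annihilator) = (e : ℕ∞) := by
    have hadd := moduleLength_additive ((Ideal.span {f} : Submodule Q Q).annihilator : Submodule Q Q)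
    rw [hQe, hLQa, hLS] at hadd
    exact WithTop.add_right_cancel (by simp : (e : ℕ∞) ≠ ⊤) hadd.symm
  have hsub : Ideal.span {f} ≤ (Ideal.span {f} : Submodule Q Q).annihilator := by
    intro x hx
    rw [Submodule.mem_annihilator]
    intro y hy
    obtain ⟨c, hc⟩ := Ideal.mem_span_singleton'.mp hx
    obtain ⟨d, hd⟩ := Ideal.mem_span_singleton'.mp hy
    rw [← hc, ← hd, smul_eq_mul]
    calc c * f * (d * f) = c * d * (f * f) := by ring
      _ = 0 := by rw [hff, mul_zero]
  have hfinal : (Ideal.span {f} : Submodule Q Q).annihilator = Ideal.span {f} := by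
    have hadd2 := moduleLength_additive (Submodule.comap ((Ideal.span {f} : Submodule Q Q).annihilator).subtype (Ideal.span {f}))
    rw [hann, moduleLength_congr (Submodule.comapSubtypeEquivOfLe hsub), hLS] at hadd2
    have h0 : moduleLength Q
        (↥((Ideal.span {f} : Submodule Q Q).annihilator) ⧸ Submodule.comap ((Ideal.span {f} : Submodule Q Q).annihilator).subtype (Ideal.span {f})) = 0 := by
      have := WithTop.add_left_cancel (show (e : ℕ∞) ≠ ⊤ by simp)
        (show (e : ℕ∞) + 0 = (e : ℕ∞) + moduleLength Q
          (↥((Ideal.span {f} : Submodule Q Q).annihilator) ⧸ Submodule.comap ((Ideal.span {f} : Submodule Q Q).annihilator).subtype (Ideal.span {f})) by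
            rw [add_zero]; exact hadd2)
      exact this.symm
    have hsub2 := subsingleton_of_moduleLength_eq_zero h0
    have htop := Submodule.Quotient.subsingleton_iff.mp hsub2
    refine le_antisymm (fun x hx => ?_) hsub
    have hx2 : (⟨x, hx⟩ : ↥((Ideal.span {f} : Submodule Q Q).annihilator)) ∈ Submodule.comap ((Ideal.span {f} : Submodule Q Q).annihilator).subtype (Ideal.span {f}) :=
      htop ▸ Submodule.mem_top
    simpa using hx2
  exact ⟨hann, hLS, hfinal⟩
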